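/- Fix λ > 0, an m×n matrix Z, an m×p matrix X with columns x₁,…,x_p, and let Ŝ ∈ ℝ^{p×k} globally minimize the convex function S ↦ ½‖Z − XS‖²_F + λ‖S‖_{2,1} over ℝ^{p×k}. If the i-th row ŝ_i of Ŝ is nonzero, then ‖x_i′(XŜ − Z)‖₂ = λ, where x_i′(XŜ − Z) ∈ ℝ^{1×k} is the i-th row of X′(XŜ − Z). -/

import Mathlib

open Matrix Finset Filter Topology

noncomputable section

/-- Squared Frobenius norm of a matrix. -/
def frobSq {m n : ℕ} (M : Matrix (Fin m) (Fin n) ℝ) : ℝ := ∑ i, ∑ j, (M i j) ^ 2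

/-- Frobenius norm. -/
def frobNorm {m n : ℕ} (M : Matrix (Fin m) (Fin n) ℝ) : ℝ := Real.sqrt (frobSq M)

/-- Euclidean norm of a vector. -/
def eNorm {n : ℕ} (v : Fin n → ℝ) : ℝ := Real.sqrt (∑ j, (v j) ^ 2)

/-- Sum of the Euclidean norms of the rows, `‖S‖_{2,1}`. -/
def norm21 {p n : ℕ} (B : Matrix (Fin p) (Fin n) ℝ) : ℝ := ∑ i, eNorm (B i)

/-- `V` has orthonormal columns: `V ∈ 𝕆^{n×k}`. -/
def IsOrthCol {n k : ℕ} (V : Matrix (Fin n) (Fin k) ℝ) : Prop := Vᵀ * V = 1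

/-- The objective `F(S, V) = ½‖Y − XSV′‖²_F + λ‖S‖_{2,1}`. -/
def Fobj {m n p k : ℕ} (Y : Matrix (Fin m) (Fin n) ℝ) (X : Matrix (Fin m) (Fin p) ℝ)
    (lam : ℝ) (S : Matrix (Fin p) (Fin k) ℝ) (V : Matrix (Fin n) (Fin k) ℝ) : ℝ :=
  (1 / 2) * frobSq (Y - X * S * Vᵀ) + lam * norm21 S


namespace Stmt18Aux

lemma eNorm_eq_norm {n : ℕ} (v : Fin n → ℝ) :
    eNorm v = ‖(WithLp.equiv 2 (Fin n → ℝ)).symm v‖ := by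
  rw [EuclideanSpace.norm_eq, eNorm]
  congr 1
  refine Finset.sum_congr rfl fun j _ => ?_
  rw [Real.norm_eq_abs, sq_abs]
  rfl

lemma eNorm_nonneg {n : ℕ} (v : Fin n → ℝ) : 0 ≤ eNorm v := Real.sqrt_nonneg _

lemma eNorm_add_le {n : ℕ} (v w : Fin n → ℝ) : eNorm (v + w) ≤ eNorm v + eNorm w := by
  simp only [eNorm_eq_norm]
  exact norm_add_le _ _

lemma eNorm_smul {n : ℕ} (t : ℝ) (v : Fin n → ℝ) : eNorm (t • v) = |t| * eNorm v := by
  simp only [eNorm_eq_norm]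
  rw [show (WithLp.equiv 2 (Fin n → ℝ)).symm (t • v) = t • (WithLp.equiv 2 (Fin n → ℝ)).symm v from rfl,
    norm_smul, Real.norm_eq_abs]

lemma eNorm_neg {n : ℕ} (v : Fin n → ℝ) : eNorm (-v) = eNorm v := by
  simp [eNorm, neg_sq]

lemma eNorm_sq {n : ℕ} (v : Fin n → ℝ) : (eNorm v) ^ 2 = ∑ j, (v j) ^ 2 := by
  rw [eNorm, Real.sq_sqrt]
  positivity

lemma eNorm_pos {n : ℕ} {v : Fin n → ℝ} (hv : v ≠ 0) : 0 < eNorm v := by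
  rw [eNorm_eq_norm]
  simpa using hv

lemma cauchy_schwarz {n : ℕ} (v w : Fin n → ℝ) :
    ∑ j, v j * w j ≤ eNorm v * eNorm w := by
  have := real_inner_le_norm ((WithLp.equiv 2 (Fin n → ℝ)).symm v)
    ((WithLp.equiv 2 (Fin n → ℝ)).symm w)
  rw [← eNorm_eq_norm, ← eNorm_eq_norm] at this
  simpa [PiLp.inner_apply, RCLike.inner_apply, mul_comm] using this

lemma nonneg_of_forall_small (A B : ℝ) (h : ∀ t : ℝ, 0 < t → t ≤ 1 → 0 ≤ t * A + t ^ 2 * B) :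
    0 ≤ A := by
  by_contra h'
  push_neg at h'
  set t := min 1 (-A / (2 * (|B| + 1))) with ht
  have hb : 0 ≤ |B| := abs_nonneg B
  have ht0 : 0 < t := lt_min one_pos (div_pos (by linarith) (by positivity))
  have ht1 : t ≤ 1 := min_le_left _ _
  have hk := h t ht0 ht1
  have h5 : 0 ≤ A + t * B := by nlinarith
  have htc : t * (2 * (|B| + 1)) ≤ -A := by
    have := min_le_right 1 (-A / (2 * (|B| + 1)))
    rw [le_div_iff₀ (by positivity)] at this
    linarith [this]
  have h6 : t * B ≤ t * |B| := by nlinarith [le_abs_self B]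
  nlinarith

lemma frobSq_nonneg {a b : ℕ} (M : Matrix (Fin a) (Fin b) ℝ) : 0 ≤ frobSq M := by
  unfold frobSq; positivity

lemma frobSq_expand {a b : ℕ} (R W : Matrix (Fin a) (Fin b) ℝ) (t : ℝ) :
    frobSq (R - t • W) = frobSq R - 2 * t * (∑ i, ∑ j, R i j * W i j) + t ^ 2 * frobSq W := by
  have hpt : ∀ (x y : ℝ), (x - t * y) ^ 2 = x ^ 2 - 2 * t * (x * y) + t ^ 2 * y ^ 2 := by
    intro x y; ring
  simp only [frobSq, Matrix.sub_apply, Matrix.smul_apply, smul_eq_mul, hpt, Finset.mul_sum,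
    ← Finset.sum_sub_distrib, ← Finset.sum_add_distrib]

end Stmt18Aux

open Stmt18Aux

/-- KKT condition for the group lasso: at a global minimizer, every nonzero row `i` of `Ŝ`
satisfies `‖x_i′(XŜ − Z)‖₂ = λ`. -/
theorem stmt18 {m p k : ℕ} (lam : ℝ) (hlam : 0 < lam)
    (Z : Matrix (Fin m) (Fin k) ℝ) (X : Matrix (Fin m) (Fin p) ℝ)
    (Shat : Matrix (Fin p) (Fin k) ℝ)
    (hmin : ∀ S : Matrix (Fin p) (Fin k) ℝ,
      (1 / 2) * frobSq (Z - X * Shat) + lam * norm21 Shat ≤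
        (1 / 2) * frobSq (Z - X * S) + lam * norm21 S) :
    ∀ i : Fin p, Shat i ≠ 0 → eNorm ((Xᵀ * (X * Shat - Z) : Matrix (Fin p) (Fin k) ℝ) i) = lam := by
  intro i hi
  set g : Matrix (Fin p) (Fin k) ℝ := Xᵀ * (X * Shat - Z) with hg
  -- key perturbation inequality
  have key : ∀ (d : Fin k → ℝ) (t : ℝ), 0 < t →
      0 ≤ t * (∑ b, d b * g i b)
        + t ^ 2 * (frobSq (X * Matrix.of fun c b => if c = i then d b else 0) / 2)
        + lam * (eNorm (Shat i + t • d) - eNorm (Shat i)) := by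
    intro d t ht
    set E : Matrix (Fin p) (Fin k) ℝ := Matrix.of fun c b => if c = i then d b else 0 with hE
    have h1 : Z - X * (Shat + t • E) = (Z - X * Shat) - t • (X * E) := by
      rw [Matrix.mul_add, Matrix.mul_smul, sub_add_eq_sub_sub]
    have hXE : ∀ a b, (X * E) a b = X a i * d b := by
      intro a b
      simp [Matrix.mul_apply, hE, mul_ite]
    have h3 : (∑ a, ∑ b, (Z - X * Shat) a b * (X * E) a b) = -∑ b, d b * g i b := by
      rw [Finset.sum_comm, ← Finset.sum_neg_distrib]
      refine Finset.sum_congr rfl fun b _ => ?_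
      rw [hg]
      simp only [Matrix.mul_apply, Matrix.transpose_apply, Matrix.sub_apply, hXE]
      rw [Finset.mul_sum, ← Finset.sum_neg_distrib]
      refine Finset.sum_congr rfl fun a _ => by ring
    have h4 : norm21 (Shat + t • E) - norm21 Shat = eNorm (Shat i + t • d) - eNorm (Shat i) := by
      unfold norm21
      rw [← Finset.sum_sub_distrib, Finset.sum_eq_single i]
      · have : (Shat + t • E) i = Shat i + t • d := by
          funext b; simp [hE]
        rw [this]
      · intro j _ hj
        have : (Shat + t • E) j = Shat j := by
          funext b; simp [hE, hj]
        rw [this, sub_self]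
      · simp
    have hm := hmin (Shat + t • E)
    rw [h1, frobSq_expand, h3] at hm
    nlinarith [hm, h4]
  set N := eNorm (g i) with hN
  have hNnn : 0 ≤ N := eNorm_nonneg _
  -- upper bound: N ≤ lam
  have hub : N ≤ lam := by
    set d : Fin k → ℝ := fun b => -(g i b) with hd
    set C := frobSq (X * Matrix.of fun c b => if c = i then d b else 0) / 2 with hC
    have hC0 : 0 ≤ C := by
      rw [hC]; linarith [frobSq_nonneg (X * Matrix.of fun c b => if c = i then d b else 0)]
    have hA : 0 ≤ (∑ b, d b * g i b) + lam * eNorm d := by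
      apply nonneg_of_forall_small _ C
      intro t ht0 ht1
      have hk := key d t ht0
      have htri : eNorm (Shat i + t • d) ≤ eNorm (Shat i) + t * eNorm d := by
        calc eNorm (Shat i + t • d) ≤ eNorm (Shat i) + eNorm (t • d) := eNorm_add_le _ _
        _ = eNorm (Shat i) + t * eNorm d := by rw [eNorm_smul, abs_of_pos ht0]
      nlinarith [eNorm_nonneg d]
    have hdsum : (∑ b, d b * g i b) = -∑ b, (g i b) ^ 2 := by
      rw [← Finset.sum_neg_distrib]
      exact Finset.sum_congr rfl fun b _ => by rw [hd]; ring
    have hdN : eNorm d = N := by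
      rw [hd, hN, show (fun b => -(g i b)) = -(g i) from rfl, eNorm_neg]
    have hsq : (∑ b, (g i b) ^ 2) = N ^ 2 := (eNorm_sq (g i)).symm
    rw [hdsum, hdN, hsq] at hA
    nlinarith
  -- lower bound: lam ≤ N
  have hlb : lam ≤ N := by
    set d : Fin k → ℝ := fun b => -(Shat i b) with hd
    set C := frobSq (X * Matrix.of fun c b => if c = i then d b else 0) / 2 with hC
    have hC0 : 0 ≤ C := by
      rw [hC]; linarith [frobSq_nonneg (X * Matrix.of fun c b => if c = i then d b else 0)]
    set Ns := eNorm (Shat i) with hNs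
    have hNs0 : 0 < Ns := eNorm_pos hi
    have hA : 0 ≤ (∑ b, d b * g i b) + lam * (-Ns) := by
      apply nonneg_of_forall_small _ C
      intro t ht0 ht1
      have hk := key d t ht0
      have heq : Shat i + t • d = (1 - t) • Shat i := by
        funext b; simp [hd]; ring
      have : eNorm (Shat i + t • d) = (1 - t) * Ns := by
        rw [heq, eNorm_smul, abs_of_nonneg (by linarith)]
      rw [this] at hk
      nlinarith
    have hcs : (∑ b, d b * g i b) ≤ eNorm d * N := cauchy_schwarz d (g i)
    have hdNs : eNorm d = Ns := by
      rw [hd, hNs, show (fun b => -(Shat i b)) = -(Shat i) from rfl, eNorm_neg]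
    rw [hdNs] at hcs
    nlinarith
  linarith


end
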